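/- arXiv:2402.08719 — 2 statements merged into one kernel-verified Lean document; each statement's English description precedes it below -/
import Mathlib

section
/- Let M be a 24×24 matrix with integer entries, let d ∈ ℝ, and suppose there exists a real linear subspace V ⊆ ℝ²⁴ of dimension at least 4 such that M·v = d·v for every v ∈ V (where M acts on ℝ²⁴ via its real entries). Then d is an algebraic integer (integral over ℤ) and the degree of the minimal polynomial of d over ℚ is at most 6. -/
open Polynomial Matrix

-- key divisibility transfer lemma
lemma aux_pow_dvd (d : ℝ) (hd : IsIntegral ℚ d) :
    ∀ (j : ℕ) (r : ℚ[X]), (X - C d) ^ j ∣ r.map (algebraMap ℚ ℝ) →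
      (minpoly ℚ d) ^ j ∣ r := by
  intro j
  induction j with
  | zero => intro r _; simp
  | succ j ih =>
    intro r hr
    have hroot : (r.map (algebraMap ℚ ℝ)).IsRoot d := by
      have h1 : (X - C d) ∣ r.map (algebraMap ℚ ℝ) :=
        dvd_trans (dvd_pow_self _ (Nat.succ_ne_zero j)) hr
      exact (dvd_iff_isRoot).mp h1
    have haev : Polynomial.aeval d r = 0 := by
      rwa [Polynomial.aeval_def, ← Polynomial.eval_map]
    obtain ⟨r', hr'⟩ := minpoly.dvd ℚ d haev
    -- p.map = (X - C d) * s
    have hp0 : Polynomial.aeval d (minpoly ℚ d) = 0 := minpoly.aeval ℚ d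
    have hproot : ((minpoly ℚ d).map (algebraMap ℚ ℝ)).IsRoot d := by
      rwa [IsRoot, Polynomial.eval_map, ← Polynomial.aeval_def]
    obtain ⟨s, hs⟩ := (dvd_iff_isRoot).mpr hproot
    have hsep : ((minpoly ℚ d).map (algebraMap ℚ ℝ)).Separable :=
      ((minpoly.irreducible hd).separable).map
    have hsq : Squarefree ((minpoly ℚ d).map (algebraMap ℚ ℝ)) := hsep.squarefree
    have hnd : ¬ (X - C d) ∣ s := by
      intro ⟨t, ht⟩
      have : (X - C d) * (X - C d) ∣ (minpoly ℚ d).map (algebraMap ℚ ℝ) := by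
        refine ⟨t, ?_⟩
        rw [hs, ht]; ring
      exact Polynomial.not_isUnit_X_sub_C d (hsq _ this)
    -- rewrite r.map
    have hmap : r.map (algebraMap ℚ ℝ) =
        (X - C d) * (s * (r'.map (algebraMap ℚ ℝ))) := by
      rw [hr', Polynomial.map_mul, hs]; ring
    rw [hmap, pow_succ'] at hr
    have hXne : (X - C d : ℝ[X]) ≠ 0 := X_sub_C_ne_zero d
    have h2 : (X - C d) ^ j ∣ s * (r'.map (algebraMap ℚ ℝ)) :=
      (mul_dvd_mul_iff_left hXne).mp hr
    have h3 : (X - C d) ^ j ∣ r'.map (algebraMap ℚ ℝ) :=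
      (prime_X_sub_C d).pow_dvd_of_dvd_mul_left j hnd h2
    rw [hr', pow_succ']
    exact mul_dvd_mul_left _ (ih r' h3)

/-- If a `24 × 24` integral matrix acts as multiplication by `d` on a real subspace of
dimension at least `4`, then `d` is an algebraic integer of degree at most `6`. -/
theorem stmt3 (M : Matrix (Fin 24) (Fin 24) ℤ) (d : ℝ)
    (V : Submodule ℝ (Fin 24 → ℝ)) (hV : 4 ≤ Module.finrank ℝ V)
    (hMV : ∀ v ∈ V, (M.map (Int.cast : ℤ → ℝ)).mulVec v = d • v) :
    IsIntegral ℤ d ∧ (minpoly ℚ d).natDegree ≤ 6 := by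
  classical
  set Mr : Matrix (Fin 24) (Fin 24) ℝ := M.map (Int.cast : ℤ → ℝ) with hMr
  set f : (Fin 24 → ℝ) →ₗ[ℝ] (Fin 24 → ℝ) := Matrix.toLin' Mr with hf
  -- basis adapted to V
  obtain ⟨W, hW⟩ := Submodule.exists_isCompl V
  set m := Module.finrank ℝ V with hm
  set k := Module.finrank ℝ W with hk
  let bV : Module.Basis (Fin m) ℝ V := Module.finBasis ℝ V
  let bW : Module.Basis (Fin k) ℝ W := Module.finBasis ℝ W
  let e : (V × W) ≃ₗ[ℝ] (Fin 24 → ℝ) := Submodule.prodEquivOfIsCompl V W hW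
  let b : Module.Basis (Fin m ⊕ Fin k) ℝ (Fin 24 → ℝ) := (bV.prod bW).map e
  set A := LinearMap.toMatrix b b f with hA
  have hAcharpoly : A.charpoly = Mr.charpoly := by
    rw [hA, LinearMap.charpoly_toMatrix]
    rw [← LinearMap.charpoly_toMatrix f (Pi.basisFun ℝ (Fin 24)),
      LinearMap.toMatrix_eq_toMatrix', hf, LinearMap.toMatrix'_toLin']
  -- block structure
  have hbV : ∀ j : Fin m, b (Sum.inl j) = (bV j : Fin 24 → ℝ) := by
    intro j
    simp [b, e, Module.Basis.prod_apply]
  have hcol : ∀ j : Fin m, f (b (Sum.inl j)) = d • b (Sum.inl j) := by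
    intro j
    rw [hbV j, hf, Matrix.toLin'_apply]
    exact hMV _ (bV j).2
  have hblock : ∀ (i : Fin m ⊕ Fin k) (j : Fin m),
      A i (Sum.inl j) = if i = Sum.inl j then d else 0 := by
    intro i j
    rw [hA, LinearMap.toMatrix_apply, hcol j, LinearEquiv.map_smul, Module.Basis.repr_self,
      Finsupp.smul_apply, Finsupp.single_apply]
    by_cases h : i = Sum.inl j <;> simp [h, eq_comm]
  have hA21 : A.toBlocks₂₁ = 0 := by
    ext i j
    simp [Matrix.toBlocks₂₁, hblock]
  have hA11 : A.toBlocks₁₁ = Matrix.diagonal (fun _ => d) := by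
    ext i j
    simp only [Matrix.toBlocks₁₁, Matrix.of_apply, hblock, Matrix.diagonal_apply]
    simp [Sum.inl.injEq]
  -- charpoly factorization
  have hdiagchar : (Matrix.diagonal (fun _ : Fin m => d)).charpoly = (X - C d) ^ m := by
    have hcm : charmatrix (Matrix.diagonal (fun _ : Fin m => d)) =
        Matrix.diagonal (fun _ : Fin m => (X : ℝ[X]) - C d) := by
      ext i j
      by_cases h : i = j
      · subst h; simp
      · rw [charmatrix_apply_ne _ _ _ h, Matrix.diagonal_apply_ne _ h,
          Matrix.diagonal_apply_ne _ h]
        simp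
    rw [Matrix.charpoly, hcm, Matrix.det_diagonal]
    simp
  have hfac : Mr.charpoly = (X - C d) ^ m * (A.toBlocks₂₂).charpoly := by
    rw [← hAcharpoly, ← Matrix.fromBlocks_toBlocks A, hA21, hA11,
      Matrix.charpoly_fromBlocks_zero₂₁, hdiagchar, Matrix.toBlocks_fromBlocks₂₂]
  have hdvd4 : (X - C d) ^ 4 ∣ Mr.charpoly := by
    rw [hfac]
    exact Dvd.dvd.mul_right (pow_dvd_pow _ (by omega)) _
  -- integrality over ℤ
  have hmpos : m ≠ 0 := by omega
  have hroot : Mr.charpoly.eval d = 0 := by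
    rw [hfac]
    simp [Polynomial.eval_pow, zero_pow hmpos]
  have hmapZ : Mr.charpoly = (M.charpoly).map (Int.castRingHom ℝ) := by
    rw [hMr, ← Matrix.charpoly_map]
    rfl
  have hint : IsIntegral ℤ d := by
    refine ⟨M.charpoly, M.charpoly_monic, ?_⟩
    have h2 : M.charpoly.map (algebraMap ℤ ℝ) = Mr.charpoly := by
      rw [hmapZ, algebraMap_int_eq]
    rw [Polynomial.eval₂_eq_eval_map, h2]
    exact hroot
  refine ⟨hint, ?_⟩
  -- degree bound
  have hdQ : IsIntegral ℚ d := hint.tower_top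
  set Mq : Matrix (Fin 24) (Fin 24) ℚ := M.map (Int.cast : ℤ → ℚ) with hMq
  have hmapQ : Mr.charpoly = (Mq.charpoly).map (algebraMap ℚ ℝ) := by
    have hMM : Mr = Mq.map (algebraMap ℚ ℝ) := by
      ext i j
      simp [hMr, hMq, Matrix.map_apply]
    rw [hMM, Matrix.charpoly_map]
  have hdvdQ : (minpoly ℚ d) ^ 4 ∣ Mq.charpoly := by
    apply aux_pow_dvd d hdQ
    rw [← hmapQ]; exact hdvd4
  have hq0 : Mq.charpoly ≠ 0 := (Mq.charpoly_monic).ne_zero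
  have hdeg : ((minpoly ℚ d) ^ 4).natDegree ≤ Mq.charpoly.natDegree :=
    Polynomial.natDegree_le_of_dvd hdvdQ hq0
  rw [Polynomial.natDegree_pow, Matrix.charpoly_natDegree_eq_dim] at hdeg
  simp only [Fintype.card_fin] at hdeg
  omega
end

section
/- Let V be a vector space over ℚ, and let f : V → V be a linear endomorphism such that f^N = id for some N ≥ 1 and such that id − f is injective. Then id − f is bijective, and its inverse is −(1/N)·∑_{k=1}^{N−1} k·f^k; that is, (id − f) ∘ (−(1/N)·∑_{k=1}^{N−1} k·f^k) = id and (−(1/N)·∑_{k=1}^{N−1} k·f^k) ∘ (id − f) = id. -/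
lemma aux_geom {R : Type*} [Ring R] [Algebra ℚ R] (x : R) (N : ℕ) :
    (1 - x) * ∑ k ∈ Finset.range N, (k : ℚ) • x ^ k =
      (∑ k ∈ Finset.range N, x ^ k) - 1 - ((N : ℚ) - 1) • x ^ N := by
  induction N with
  | zero => simp
  | succ n ih =>
      rw [Finset.sum_range_succ, mul_add, ih, Finset.sum_range_succ, mul_smul_comm]
      have h1 : (1 - x) * x ^ n = x ^ n - x ^ (n + 1) := by rw [sub_mul, one_mul, pow_succ']
      have h2 : ((n : ℚ) + 1 - 1) = n := by ring
      push_cast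
      rw [h1, h2, smul_sub, sub_smul, one_smul]
      abel

/-- If `f` is a `ℚ`-linear endomorphism with `f ^ N = 1` and `1 - f` injective, then
`1 - f` is bijective with inverse `-(1/N) • ∑_{k=1}^{N-1} k • f^k`. -/
theorem stmt7 {V : Type*} [AddCommGroup V] [Module ℚ V]
    (f : V →ₗ[ℚ] V) (N : ℕ) (hN : 1 ≤ N) (hfN : f ^ N = 1)
    (hinj : Function.Injective ⇑(1 - f)) :
    Function.Bijective ⇑(1 - f) ∧
      (1 - f) * (-((1 : ℚ) / N) • ∑ k ∈ Finset.Ico 1 N, (k : ℚ) • f ^ k) = 1 ∧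
      (-((1 : ℚ) / N) • ∑ k ∈ Finset.Ico 1 N, (k : ℚ) • f ^ k) * (1 - f) = 1 := by
  set S : V →ₗ[ℚ] V := ∑ k ∈ Finset.Ico 1 N, (k : ℚ) • f ^ k with hS
  have hS' : S = ∑ k ∈ Finset.range N, (k : ℚ) • f ^ k := by
    rw [hS, Finset.range_eq_Ico,
      Finset.sum_eq_sum_Ico_succ_bot (show 0 < N by omega)]
    simp
  have hPzero : (∑ k ∈ Finset.range N, f ^ k) = 0 := by
    have h1 : (1 - f) * (∑ k ∈ Finset.range N, f ^ k) = 0 := by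
      have hg := geom_sum_mul f N
      have hcomm : (∑ i ∈ Finset.range N, f ^ i) * (f - 1)
          = (f - 1) * ∑ i ∈ Finset.range N, f ^ i := by
        refine (Commute.sum_left _ _ _ fun i _ => ?_)
        exact ((Commute.refl f).pow_left i).sub_right ((Commute.one_right _))
      rw [hcomm] at hg
      have h3 : (1 - f) * (∑ i ∈ Finset.range N, f ^ i)
          = -((f - 1) * ∑ i ∈ Finset.range N, f ^ i) := by
        rw [← neg_mul, neg_sub]
      rw [h3, hg, hfN, sub_self, neg_zero]
    ext v
    have h2 : (1 - f) ((∑ k ∈ Finset.range N, f ^ k) v) = (1 - f) 0 := by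
      have := LinearMap.congr_fun h1 v
      simpa using this
    simpa using hinj h2
  have key : (1 - f) * S = -(N : ℚ) • 1 := by
    rw [hS', aux_geom f N, hfN, hPzero, sub_smul, one_smul, neg_smul]
    abel
  have hleft : (1 - f) * (-((1 : ℚ) / N) • S) = 1 := by
    rw [mul_smul_comm, key, smul_smul]
    have hNne : (N : ℚ) ≠ 0 := Nat.cast_ne_zero.mpr (by omega)
    have : (-((1 : ℚ) / N) * -(N : ℚ)) = 1 := by field_simp
    rw [this, one_smul]
  have hcommS : Commute (1 - f) S := by
    refine (Commute.one_left S).sub_left ?_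
    rw [hS]
    refine Commute.sum_right _ _ _ fun i _ => ?_
    exact (((Commute.refl f).pow_right i)).smul_right _
  have hright : (-((1 : ℚ) / N) • S) * (1 - f) = 1 := by
    rw [smul_mul_assoc, ← hcommS.eq, ← mul_smul_comm, hleft]
  refine ⟨⟨hinj, ?_⟩, hleft, hright⟩
  intro v
  refine ⟨(-((1 : ℚ) / N) • S) v, ?_⟩
  have := LinearMap.congr_fun hleft v
  simpa only [Module.End.mul_apply, Module.End.one_apply] using this
end
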